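/- The second-order cone relaxation is tight for a single leaf branch: let r > 0 and χ > 0 (branch resistance and reactance), v > 0 (squared upstream voltage magnitude), and P, Q ∈ ℝ with P² + Q² > 0. Define f(l) = l·v − (r·l − P)² − (χ·l − Q)² and S = {l ∈ ℝ : l ≥ 0 and f(l) ≥ 0}. If S is nonempty and l* is a minimizer of the identity function l ↦ l over S (equivalently, l* minimizes the line loss r·l over S), then f(l*) = 0, i.e. l*·v = (r·l* − P)² + (χ·l* − Q)². -/
import Mathlib


/-- the SOC relaxation is tight for a single leaf branch with
the upper voltage bound inactive. If `l*` minimizes `l` (equivalently the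
line loss `r·l`) over `S = {l ≥ 0 : f(l) ≥ 0}`, where
`f(l) = l·v − (r·l − P)² − (χ·l − Q)²`, then `f(l*) = 0`. -/
theorem leaf_branch_socp_tight
    (r χ v P Q : ℝ) (hr : 0 < r) (hχ : 0 < χ) (hv : 0 < v)
    (hPQ : 0 < P ^ 2 + Q ^ 2)
    (f : ℝ → ℝ)
    (hf : f = fun l => l * v - (r * l - P) ^ 2 - (χ * l - Q) ^ 2)
    (S : Set ℝ) (hS : S = {l : ℝ | 0 ≤ l ∧ 0 ≤ f l})
    (lstar : ℝ) (hmem : lstar ∈ S) (hmin : ∀ l ∈ S, lstar ≤ l) :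
    f lstar = 0 := by
  subst hf hS
  obtain ⟨hl0, hfl⟩ := hmem
  by_contra hne
  have hpos : 0 < lstar * v - (r * lstar - P) ^ 2 - (χ * lstar - Q) ^ 2 :=
    lt_of_le_of_ne hfl (fun h => hne h.symm)
  -- f 0 < 0, so lstar > 0
  have hlpos : 0 < lstar := by
    rcases hl0.lt_or_eq with h | h
    · exact h
    · exfalso
      rw [← h] at hpos
      simp only [zero_mul, mul_zero, zero_sub, neg_sub] at hpos
      nlinarith [hpos]
  -- continuity
  have hcont : Continuous fun l : ℝ => l * v - (r * l - P) ^ 2 - (χ * l - Q) ^ 2 := by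
    continuity
  have hcont' : ContinuousAt (fun l : ℝ => l * v - (r * l - P) ^ 2 - (χ * l - Q) ^ 2) lstar :=
    hcont.continuousAt
  obtain ⟨δ, hδ, hball⟩ := Metric.continuousAt_iff.mp hcont'
    (lstar * v - (r * lstar - P) ^ 2 - (χ * lstar - Q) ^ 2) hpos
  set ε := min (δ / 2) (lstar / 2) with hε
  have hεpos : 0 < ε := lt_min (by linarith) (by linarith)
  have hεlt : ε < δ := lt_of_le_of_lt (min_le_left _ _) (by linarith)
  set l' := lstar - ε with hl'
  have hdist : dist l' lstar < δ := by
    rw [Real.dist_eq]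
    rw [hl']
    rw [abs_of_nonpos (by linarith)]
    linarith
  have hfl' := hball hdist
  rw [Real.dist_eq] at hfl'
  have hfl'pos : 0 < l' * v - (r * l' - P) ^ 2 - (χ * l' - Q) ^ 2 := by
    cases abs_lt.mp hfl' with
    | intro h1 h2 => linarith
  have hl'0 : 0 ≤ l' := by
    have : ε ≤ lstar / 2 := min_le_right _ _
    rw [hl']; linarith
  have := hmin l' ⟨hl'0, le_of_lt hfl'pos⟩
  rw [hl'] at this
  linarith
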